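/- For x ≥ 1 let L(x) denote the smallest positive integer with 2^{L(x)} > L(x)·x + 1. Let I be a finite set of positive reals of size n ≥ 2, listed in sorted order I[1] ≤ … ≤ I[n], and write I[i..j] := {I[max(i,1)], …, I[min(j,n)]}. Then for every ε ∈ (0,1): OPT(I) ≤ min over 2 ≤ ℓ ≤ n of OPT_L(I[ℓ − L(4/ε)² .. ℓ]) ≤ (1+ε) · OPT(I). -/

import Mathlib

/-- The ratio `R(X,Y) = max{Σ(X)/Σ(Y), Σ(Y)/Σ(X)}` of two finite sets of reals. -/
noncomputable def ratio (X Y : Finset ℝ) : ℝ :=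
  max (X.sum id / Y.sum id) (Y.sum id / X.sum id)

/-- `OPT(I)`: the minimum ratio over all nonempty disjoint subsets `X, Y ⊆ I`. -/
noncomputable def OPT (I : Finset ℝ) : ℝ :=
  sInf {r | ∃ X Y : Finset ℝ, X ⊆ I ∧ Y ⊆ I ∧ Disjoint X Y ∧
    X.Nonempty ∧ Y.Nonempty ∧ r = ratio X Y}

/-- `OPT_L(I)`: the minimum ratio over all nonempty disjoint subsets `X, Y ⊆ I` such that
`max(I) ∈ X ∪ Y` (i.e. some element of `X ∪ Y` is an upper bound of `I`). -/
noncomputable def OPTL (I : Finset ℝ) : ℝ :=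
  sInf {r | ∃ X Y : Finset ℝ, X ⊆ I ∧ Y ⊆ I ∧ Disjoint X Y ∧
    X.Nonempty ∧ Y.Nonempty ∧ (∃ m ∈ X ∪ Y, ∀ x ∈ I, x ≤ m) ∧ r = ratio X Y}

/-- `L(x)`: the smallest positive integer `L` with `2^L > L·x + 1`. -/
noncomputable def LL (x : ℝ) : ℕ :=
  sInf {L : ℕ | 0 < L ∧ (2 : ℝ) ^ L > L * x + 1}



lemma aux_L_nonempty (x : ℝ) (hx : 0 ≤ x) :
    {L : ℕ | 0 < L ∧ (2 : ℝ) ^ L > L * x + 1}.Nonempty := by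
  obtain ⟨k, hkpos, hk1, h2x⟩ : ∃ k : ℕ, 0 < k ∧ (1:ℝ) ≤ k ∧ 2 * x ≤ k := by
    refine ⟨⌈2 * x⌉₊ + 1, by omega, by exact_mod_cast Nat.le_add_left 1 _, ?_⟩
    push_cast
    linarith [Nat.le_ceil (2 * x)]
  refine ⟨2 * k, by positivity, ?_⟩
  have hpow : (k : ℝ) + 1 ≤ (2 : ℝ) ^ k := by
    have h := Nat.lt_two_pow_self (n := k)
    have h' : ((k + 1 : ℕ) : ℝ) ≤ ((2 ^ k : ℕ) : ℝ) := by exact_mod_cast h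
    push_cast at h'
    linarith
  have h1 : (2 : ℝ) ^ (2 * k) = ((2 : ℝ) ^ k) ^ 2 := by rw [mul_comm, pow_mul]
  have h2 : ((k : ℝ) + 1) ^ 2 ≤ ((2 : ℝ) ^ k) ^ 2 := by
    apply pow_le_pow_left₀ (by positivity) hpow
  have h3 : ((2 * k : ℕ) : ℝ) * x + 1 < ((k : ℝ) + 1) ^ 2 := by
    push_cast
    nlinarith
  rw [h1]
  exact lt_of_lt_of_le h3 h2

lemma aux_pigeonhole (B : Finset ℕ) (f : ℕ → ℝ) (w : ℝ) (hw : 0 < w)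
    (hnn : ∀ i ∈ B, 0 ≤ f i)
    (hub : (∑ i ∈ B, f i) < w * ((2 : ℝ) ^ B.card - 1)) :
    ∃ S₁ S₂ : Finset ℕ, S₁ ⊆ B ∧ S₂ ⊆ B ∧ S₁ ≠ S₂ ∧
      |(∑ i ∈ S₁, f i) - ∑ i ∈ S₂, f i| < w := by
  have hsub_nn : ∀ S ∈ B.powerset, (0:ℝ) ≤ ∑ i ∈ S, f i := by
    intro S hS
    rw [Finset.mem_powerset] at hS
    exact Finset.sum_nonneg fun i hi => hnn i (hS hi)
  have hsub_ub : ∀ S ∈ B.powerset, (∑ i ∈ S, f i) < w * ((2:ℝ) ^ B.card - 1) := by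
    intro S hS
    rw [Finset.mem_powerset] at hS
    refine lt_of_le_of_lt ?_ hub
    exact Finset.sum_le_sum_of_subset_of_nonneg hS (fun i hi _ => hnn i hi)
  have hpow1 : (1:ℕ) ≤ 2 ^ B.card := Nat.one_le_two_pow
  have hcast : ((2 ^ B.card - 1 : ℕ) : ℝ) = (2:ℝ) ^ B.card - 1 := by
    push_cast [Nat.cast_sub hpow1]
    ring
  have hcard : (Finset.range (2 ^ B.card - 1)).card < B.powerset.card := by
    rw [Finset.card_range, Finset.card_powerset]
    omega
  have hmaps : ∀ S ∈ B.powerset, ⌊(∑ i ∈ S, f i) / w⌋₊ ∈ Finset.range (2 ^ B.card - 1) := by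
    intro S hS
    rw [Finset.mem_range]
    rw [Nat.floor_lt (div_nonneg (hsub_nn S hS) hw.le)]
    rw [hcast, div_lt_iff₀ hw]
    linarith [hsub_ub S hS]
  obtain ⟨S₁, hS₁, S₂, hS₂, hne, heq⟩ :=
    Finset.exists_ne_map_eq_of_card_lt_of_maps_to hcard hmaps
  rw [Finset.mem_powerset] at hS₁ hS₂
  refine ⟨S₁, S₂, hS₁, hS₂, hne, ?_⟩
  set s₁ := ∑ i ∈ S₁, f i with hs₁
  set s₂ := ∑ i ∈ S₂, f i with hs₂
  have h₁nn : 0 ≤ s₁ := Finset.sum_nonneg fun i hi => hnn i (hS₁ hi)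
  have h₂nn : 0 ≤ s₂ := Finset.sum_nonneg fun i hi => hnn i (hS₂ hi)
  have hf1a : (⌊s₁ / w⌋₊ : ℝ) ≤ s₁ / w := Nat.floor_le (div_nonneg h₁nn hw.le)
  have hf2a : (⌊s₁ / w⌋₊ : ℝ) ≤ s₂ / w := by
    rw [heq]; exact Nat.floor_le (div_nonneg h₂nn hw.le)
  have hf1b : s₁ / w < ⌊s₁ / w⌋₊ + 1 := Nat.lt_floor_add_one _
  have hf2b : s₂ / w < ⌊s₁ / w⌋₊ + 1 := by
    rw [heq]; exact Nat.lt_floor_add_one _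
  rw [abs_lt]
  constructor
  · have h1 := (div_lt_iff₀ hw).mp hf2b
    have h2 := (le_div_iff₀ hw).mp hf1a
    nlinarith
  · have h1 := (div_lt_iff₀ hw).mp hf1b
    have h2 := (le_div_iff₀ hw).mp hf2a
    nlinarith


lemma aux_growth (n L : ℕ) (a : ℕ → ℝ)
    (hfast : ∀ j, 1 ≤ j → j + (L - 1) ≤ n → 2 * a j < a (j + (L - 1))) :
    ∀ t j, 1 ≤ j → j + t * (L - 1) ≤ n → (2 : ℝ) ^ t * a j ≤ a (j + t * (L - 1)) := by
  intro t
  induction t with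
  | zero => intro j h1 h2; simp
  | succ t ih =>
    intro j h1 h2
    have hle : j + t * (L - 1) ≤ n := by
      have : t * (L-1) ≤ (t+1) * (L-1) := Nat.mul_le_mul_right _ (by omega)
      omega
    have h3 := ih j h1 hle
    have h4 := hfast (j + t * (L - 1)) (by omega) (by
      have : j + t * (L-1) + (L-1) = j + (t+1) * (L-1) := by ring
      omega)
    have heq : j + (t + 1) * (L - 1) = j + t * (L - 1) + (L - 1) := by ring
    rw [heq, pow_succ]
    nlinarith


lemma aux_sigma (n L : ℕ) (a : ℕ → ℝ) (hL : 2 ≤ L)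
    (hpos : ∀ i ∈ Finset.Icc 1 n, 0 < a i)
    (hmono : ∀ i j, 1 ≤ i → i ≤ j → j ≤ n → a i ≤ a j)
    (hfast : ∀ j, 1 ≤ j → j + (L - 1) ≤ n → 2 * a j < a (j + (L - 1))) :
    ∀ q, 1 ≤ q → q ≤ n → (∑ i ∈ Finset.Icc 1 q, a i) ≤ 2 * ((L:ℝ) - 1) * a q := by
  intro q
  induction q using Nat.strong_induction_on with
  | _ q ih =>
    intro hq1 hqn
    have haq : 0 < a q := hpos q (Finset.mem_Icc.mpr ⟨hq1, hqn⟩)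
    have hbound : ∀ lo : ℕ, (∑ i ∈ Finset.Ioc lo q, a i) ≤ ((q - lo : ℕ) : ℝ) * a q := by
      intro lo
      have : ∀ i ∈ Finset.Ioc lo q, a i ≤ a q := by
        intro i hi
        rw [Finset.mem_Ioc] at hi
        exact hmono i q (by omega) hi.2 hqn
      calc (∑ i ∈ Finset.Ioc lo q, a i) ≤ (Finset.Ioc lo q).card • a q :=
            Finset.sum_le_card_nsmul _ _ _ this
        _ = ((q - lo : ℕ) : ℝ) * a q := by rw [Nat.card_Ioc, nsmul_eq_mul]
    have hIcc : Finset.Icc 1 q = Finset.Ioc 0 q := by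
      rw [← Finset.Icc_add_one_left_eq_Ioc, zero_add]
    by_cases hsmall : q ≤ L - 1
    · rw [hIcc]
      calc (∑ i ∈ Finset.Ioc 0 q, a i) ≤ ((q - 0 : ℕ) : ℝ) * a q := hbound 0
        _ ≤ 2 * ((L:ℝ) - 1) * a q := by
          have h1 : ((q - 0 : ℕ) : ℝ) ≤ 2 * ((L:ℝ) - 1) := by
            have : (q : ℝ) ≤ (L:ℝ) - 1 := by
              have : ((q:ℕ):ℝ) ≤ ((L - 1 : ℕ):ℝ) := by exact_mod_cast hsmall
              rw [Nat.cast_sub (by omega)] at this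
              simpa using this
            simp only [Nat.sub_zero]
            linarith [this, (by exact_mod_cast Nat.one_le_iff_ne_zero.mpr (by omega) : (1:ℝ) ≤ (L:ℝ))]
          nlinarith
    · push_neg at hsmall
      set j := q - (L - 1) with hj
      have hj1 : 1 ≤ j := by omega
      have hjq : j < q := by omega
      have hjLq : j + (L - 1) = q := by omega
      have hsplit : (∑ i ∈ Finset.Ioc 0 j, a i) + (∑ i ∈ Finset.Ioc j q, a i)
          = ∑ i ∈ Finset.Ioc 0 q, a i :=
        Finset.sum_Ioc_consecutive _ (by omega) (by omega)
    -- induction hypothesis on j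
      have hIH : (∑ i ∈ Finset.Icc 1 j, a i) ≤ 2 * ((L:ℝ) - 1) * a j :=
        ih j hjq hj1 (by omega)
      have hfj : 2 * a j < a q := by
        have := hfast j hj1 (by omega)
        rwa [hjLq] at this
      have htop : (∑ i ∈ Finset.Ioc j q, a i) ≤ ((L:ℝ) - 1) * a q := by
        have h := hbound j
        have : ((q - j : ℕ) : ℝ) = (L:ℝ) - 1 := by
          have hqj : q - j = L - 1 := by omega
          rw [hqj, Nat.cast_sub (by omega)]
          simp
        rw [this] at h
        exact h
      have hL1 : (1:ℝ) ≤ (L:ℝ) - 1 := by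
        have : (2:ℝ) ≤ (L:ℝ) := by exact_mod_cast hL
        linarith
      have hIccj : Finset.Icc 1 j = Finset.Ioc 0 j := by rw [← Finset.Icc_add_one_left_eq_Ioc, zero_add]
      rw [hIcc, ← hsplit]
      rw [hIccj] at hIH
      nlinarith

set_option maxHeartbeats 2000000 in
/-- **Lemma 3.2 (Reduction).** For a sorted set `I = {a 1 < … < a n}` of positive reals and
`ε ∈ (0,1)`:
`OPT(I) ≤ min_{2 ≤ ℓ ≤ n} OPT_L(I[ℓ − L(4/ε)² .. ℓ]) ≤ (1+ε)·OPT(I)`. -/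
theorem reduction_lemma (ε : ℝ) (hε : ε ∈ Set.Ioo (0 : ℝ) 1)
    (n : ℕ) (hn : 2 ≤ n) (a : ℕ → ℝ)
    (hpos : ∀ i ∈ Finset.Icc 1 n, 0 < a i)
    (hsorted : ∀ i j, 1 ≤ i → i < j → j ≤ n → a i < a j)
    (I : Finset ℝ) (hI : I = (Finset.Icc 1 n).image a) :
    OPT I ≤ (Finset.Icc 2 n).inf' (Finset.nonempty_Icc.mpr hn)
        (fun ℓ => OPTL ((Finset.Icc (max (ℓ - (LL (4 / ε)) ^ 2) 1) ℓ).image a)) ∧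
    (Finset.Icc 2 n).inf' (Finset.nonempty_Icc.mpr hn)
        (fun ℓ => OPTL ((Finset.Icc (max (ℓ - (LL (4 / ε)) ^ 2) 1) ℓ).image a))
      ≤ (1 + ε) * OPT I := by
  obtain ⟨hε0, hε1⟩ := hε
  subst hI
  set L := LL (4 / ε) with hLdef
  obtain ⟨hLpos, hLgt⟩ : 0 < L ∧ (2:ℝ) ^ L > L * (4/ε) + 1 :=
    Nat.sInf_mem (aux_L_nonempty (4/ε) (by positivity))
  have hε0' : (0:ℝ) < 1 + ε := by linarith
  have hE : 4 * (L:ℝ) / ε + 1 < 2 ^ L := by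
    have h : (L:ℝ) * (4/ε) = 4 * L / ε := by ring
    rw [h] at hLgt; linarith
  have hL2 : 2 ≤ L := by
    by_contra h
    push_neg at h
    have hL1 : L = 1 := by omega
    rw [hL1] at hE
    norm_num at hE
    have h4 : 4 / ε < 1 := by linarith
    have := (div_lt_one hε0).mp h4
    linarith
  have hM1 : 1 ≤ L ^ 2 := Nat.one_le_pow _ _ (by omega)
  have hLM2 : L ≤ L ^ 2 := Nat.le_self_pow (by norm_num) L
  have hLM : L - 1 ≤ L ^ 2 := le_trans (Nat.sub_le _ _) hLM2
  -- basic positivity / monotonicity facts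
  have hapos : ∀ i, 1 ≤ i → i ≤ n → 0 < a i := fun i h1 h2 =>
    hpos i (Finset.mem_Icc.mpr ⟨h1, h2⟩)
  have hamono : ∀ i j, 1 ≤ i → i ≤ j → j ≤ n → a i ≤ a j := by
    intro i j h1 h2 h3
    rcases eq_or_lt_of_le h2 with h | h
    · rw [h]
    · exact (hsorted i j h1 h h3).le
  have hainj : ∀ J : Finset ℕ, J ⊆ Finset.Icc 1 n →
      ∀ x ∈ J, ∀ y ∈ J, a x = a y → x = y := by
    intro J hJ x hx y hy hxy
    have hx' := Finset.mem_Icc.mp (hJ hx)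
    have hy' := Finset.mem_Icc.mp (hJ hy)
    by_contra hne
    rcases lt_or_gt_of_ne hne with h | h
    · exact absurd hxy (ne_of_lt (hsorted x y hx'.1 h hy'.2))
    · exact absurd hxy.symm (ne_of_lt (hsorted y x hy'.1 h hx'.2))
  set S : Finset ℕ → ℝ := fun J => ∑ i ∈ J, a i with hSdef
  have hSimg : ∀ J : Finset ℕ, J ⊆ Finset.Icc 1 n → (J.image a).sum id = S J := by
    intro J hJ
    rw [Finset.sum_image (hainj J hJ)]
    rfl
  have hSpos : ∀ J : Finset ℕ, J ⊆ Finset.Icc 1 n → J.Nonempty → 0 < S J := by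
    intro J hJ hne
    apply Finset.sum_pos (fun i hi => ?_) hne
    have := Finset.mem_Icc.mp (hJ hi)
    exact hapos i this.1 this.2
  have hdisjimg : ∀ J K : Finset ℕ, J ⊆ Finset.Icc 1 n → K ⊆ Finset.Icc 1 n →
      Disjoint J K → Disjoint (J.image a) (K.image a) := by
    intro J K hJ hK hd
    rw [Finset.disjoint_left]
    rintro x hxJ hxK
    obtain ⟨i, hi, rfl⟩ := Finset.mem_image.mp hxJ
    obtain ⟨i', hi', hii'⟩ := Finset.mem_image.mp hxK
    have : i' = i := hainj _ (by
      intro z hz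
      rcases Finset.mem_union.mp hz with h | h
      · exact hJ h
      · exact hK h) i' (Finset.mem_union_right _ hi') i (Finset.mem_union_left _ hi) hii'
    rw [Finset.disjoint_left] at hd
    exact hd hi (this ▸ hi')
  have hratioimg : ∀ J K : Finset ℕ, J ⊆ Finset.Icc 1 n → K ⊆ Finset.Icc 1 n →
      ratio (J.image a) (K.image a) = max (S J / S K) (S K / S J) := by
    intro J K hJ hK
    unfold ratio
    rw [hSimg J hJ, hSimg K hK]
  -- the OPT set
  set Sopt : Set ℝ := {r | ∃ X Y : Finset ℝ, X ⊆ (Finset.Icc 1 n).image a ∧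
      Y ⊆ (Finset.Icc 1 n).image a ∧ Disjoint X Y ∧
      X.Nonempty ∧ Y.Nonempty ∧ r = ratio X Y} with hSoptdef
  have hOPTdef : OPT ((Finset.Icc 1 n).image a) = sInf Sopt := rfl
  have hIpos : ∀ x ∈ (Finset.Icc 1 n).image a, 0 < x := by
    intro x hx
    obtain ⟨i, hi, rfl⟩ := Finset.mem_image.mp hx
    have := Finset.mem_Icc.mp hi
    exact hapos i this.1 this.2
  have hlb : ∀ r ∈ Sopt, (1:ℝ) ≤ r := by
    rintro r ⟨X, Y, hX, hY, hd, hXne, hYne, rfl⟩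
    have hXpos : 0 < X.sum id := Finset.sum_pos (fun i hi => hIpos i (hX hi)) hXne
    have hYpos : 0 < Y.sum id := Finset.sum_pos (fun i hi => hIpos i (hY hi)) hYne
    unfold ratio
    rcases le_total (X.sum id) (Y.sum id) with h | h
    · exact le_max_of_le_right ((one_le_div hXpos).mpr h)
    · exact le_max_of_le_left ((one_le_div hYpos).mpr h)
  have hbdd : BddBelow Sopt := ⟨1, hlb⟩
  have hmemS : ∀ J K : Finset ℕ, J ⊆ Finset.Icc 1 n → K ⊆ Finset.Icc 1 n →
      Disjoint J K → J.Nonempty → K.Nonempty →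
      max (S J / S K) (S K / S J) ∈ Sopt := by
    intro J K hJ hK hd hJne hKne
    exact ⟨J.image a, K.image a, Finset.image_subset_image hJ,
      Finset.image_subset_image hK, hdisjimg J K hJ hK hd,
      hJne.image a, hKne.image a, (hratioimg J K hJ hK).symm⟩
  have hOPT_le : ∀ J K : Finset ℕ, J ⊆ Finset.Icc 1 n → K ⊆ Finset.Icc 1 n →
      Disjoint J K → J.Nonempty → K.Nonempty →
      OPT ((Finset.Icc 1 n).image a) ≤ max (S J / S K) (S K / S J) := by
    intro J K hJ hK hd hJne hKne
    rw [hOPTdef]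
    exact csInf_le hbdd (hmemS J K hJ hK hd hJne hKne)
  have hSopt_ne : Sopt.Nonempty := by
    refine ⟨_, hmemS ({n} : Finset ℕ) ({1} : Finset ℕ) ?_ ?_ ?_ ⟨n, Finset.mem_singleton_self n⟩
      ⟨1, Finset.mem_singleton_self 1⟩⟩
    · rw [Finset.singleton_subset_iff]
      exact Finset.mem_Icc.mpr ⟨by omega, le_refl n⟩
    · rw [Finset.singleton_subset_iff]
      exact Finset.mem_Icc.mpr ⟨le_refl 1, by omega⟩
    · rw [Finset.disjoint_singleton]; omega
  have hfin : Sopt.Finite := by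
    apply Set.Finite.subset (Set.Finite.image
      (f := fun p : Finset ℝ × Finset ℝ => ratio p.1 p.2)
      (((Finset.Icc 1 n).image a).powerset ×ˢ ((Finset.Icc 1 n).image a).powerset).finite_toSet)
    rintro r ⟨X, Y, hX, hY, _, _, _, rfl⟩
    exact ⟨(X, Y), by
      simp only [Finset.coe_product, Set.mem_prod, Finset.mem_coe, Finset.mem_powerset]
      exact ⟨hX, hY⟩, rfl⟩
  have hOPT_mem : OPT ((Finset.Icc 1 n).image a) ∈ Sopt := by
    rw [hOPTdef]
    exact Set.Nonempty.csInf_mem hSopt_ne hfin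
  have hr1 : 1 ≤ OPT ((Finset.Icc 1 n).image a) := hlb _ hOPT_mem
  -- max resolution helper
  have hmaxeq : ∀ x y : ℝ, 0 < y → y ≤ x → max (x/y) (y/x) = x/y := by
    intro x y hy hxy
    have hx : 0 < x := lt_of_lt_of_le hy hxy
    exact max_eq_left (le_trans ((div_le_one hx).mpr hxy) ((one_le_div hy).mpr hxy))
  -- the feasibility lemma for OPTL on windows
  have hfeas : ∀ ℓ' ∈ Finset.Icc 2 n, ∀ J K : Finset ℕ,
      J ⊆ Finset.Icc (max (ℓ' - L ^ 2) 1) ℓ' → K ⊆ Finset.Icc (max (ℓ' - L ^ 2) 1) ℓ' →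
      Disjoint J K → J.Nonempty → K.Nonempty → ℓ' ∈ J ∪ K →
      OPTL ((Finset.Icc (max (ℓ' - L ^ 2) 1) ℓ').image a) ≤ max (S J / S K) (S K / S J) := by
    intro ℓ' hℓ' J K hJ hK hd hJne hKne hℓ'mem
    rw [Finset.mem_Icc] at hℓ'
    have hWsub : Finset.Icc (max (ℓ' - L ^ 2) 1) ℓ' ⊆ Finset.Icc 1 n := by
      intro i hi
      rw [Finset.mem_Icc] at hi ⊢
      exact ⟨le_trans (le_max_right _ _) hi.1, le_trans hi.2 hℓ'.2⟩
    have hJn := hJ.trans hWsub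
    have hKn := hK.trans hWsub
    have hWpos : ∀ x ∈ (Finset.Icc (max (ℓ' - L ^ 2) 1) ℓ').image a, 0 < x := by
      intro x hx
      obtain ⟨i, hi, rfl⟩ := Finset.mem_image.mp hx
      have := Finset.mem_Icc.mp (hWsub hi)
      exact hapos i this.1 this.2
    apply csInf_le
    · refine ⟨0, ?_⟩
      rintro r ⟨X, Y, hX, hY, _, hXne, hYne, _, rfl⟩
      unfold ratio
      have hXpos : 0 ≤ X.sum id :=
        Finset.sum_nonneg (fun i hi => (hWpos i (hX hi)).le)
      have hYpos : 0 ≤ Y.sum id :=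
        Finset.sum_nonneg (fun i hi => (hWpos i (hY hi)).le)
      exact le_max_of_le_left (div_nonneg hXpos hYpos)
    · refine ⟨J.image a, K.image a, Finset.image_subset_image hJ,
        Finset.image_subset_image hK, hdisjimg J K hJn hKn hd,
        hJne.image a, hKne.image a, ⟨a ℓ', ?_, ?_⟩,
        (hratioimg J K hJn hKn).symm⟩
      · rw [← Finset.image_union]
        exact Finset.mem_image_of_mem a hℓ'mem
      · intro x hx
        obtain ⟨i, hi, rfl⟩ := Finset.mem_image.mp hx
        rw [Finset.mem_Icc] at hi
        exact hamono i ℓ' (le_trans (le_max_right _ _) hi.1) hi.2 hℓ'.2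
  constructor
  · -- first inequality
    apply Finset.le_inf'
    intro ℓ' hℓ'
    rw [Finset.mem_Icc] at hℓ'
    apply csInf_le_csInf hbdd
    · -- nonempty : the pair ({a ℓ'}, {a (ℓ'-1)})
      refine ⟨ratio {a ℓ'} {a (ℓ' - 1)}, {a ℓ'}, {a (ℓ' - 1)}, ?_, ?_, ?_,
        Finset.singleton_nonempty _, Finset.singleton_nonempty _, ⟨a ℓ', ?_, ?_⟩, rfl⟩
      · rw [Finset.singleton_subset_iff]
        exact Finset.mem_image_of_mem a (Finset.mem_Icc.mpr
          ⟨max_le (Nat.sub_le _ _) (by omega), le_refl _⟩)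
      · rw [Finset.singleton_subset_iff]
        exact Finset.mem_image_of_mem a (Finset.mem_Icc.mpr
          ⟨max_le (by omega) (by omega), by omega⟩)
      · rw [Finset.disjoint_singleton]
        exact ne_of_gt (hsorted (ℓ' - 1) ℓ' (by omega) (by omega) hℓ'.2)
      · exact Finset.mem_union_left _ (Finset.mem_singleton_self _)
      · intro x hx
        obtain ⟨i, hi, rfl⟩ := Finset.mem_image.mp hx
        rw [Finset.mem_Icc] at hi
        exact hamono i ℓ' (le_trans (le_max_right _ _) hi.1) hi.2 hℓ'.2
    · -- subset
      rintro r ⟨X, Y, hX, hY, hd, hXne, hYne, _, rfl⟩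
      have hWI : (Finset.Icc (max (ℓ' - L ^ 2) 1) ℓ').image a ⊆ (Finset.Icc 1 n).image a := by
        apply Finset.image_subset_image
        intro i hi
        rw [Finset.mem_Icc] at hi ⊢
        exact ⟨le_trans (le_max_right _ _) hi.1, le_trans hi.2 hℓ'.2⟩
      exact ⟨X, Y, hX.trans hWI, hY.trans hWI, hd, hXne, hYne, rfl⟩
  · -- second inequality
    suffices h : ∃ l2 ∈ Finset.Icc 2 n,
        OPTL ((Finset.Icc (max (l2 - L ^ 2) 1) l2).image a)
          ≤ (1 + ε) * OPT ((Finset.Icc 1 n).image a) by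
      obtain ⟨l2, hmem, hle⟩ := h
      exact le_trans (Finset.inf'_le _ hmem) hle
    -- nonnegativity helper
    have hanonneg : ∀ J : Finset ℕ, J ⊆ Finset.Icc 1 n → ∀ i ∈ J, 0 ≤ a i := by
      intro J hJ i hi
      have := Finset.mem_Icc.mp (hJ hi)
      exact (hapos i this.1 this.2).le
    -- extract an optimal pair and convert to index sets
    obtain ⟨X₀, Y₀, hX₀I, hY₀I, hdXY, hX₀ne, hY₀ne, hropt⟩ := hOPT_mem
    set J1 := (Finset.Icc 1 n).filter (fun i => a i ∈ X₀) with hJ1def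
    set K1 := (Finset.Icc 1 n).filter (fun i => a i ∈ Y₀) with hK1def
    have hJ1sub : J1 ⊆ Finset.Icc 1 n := Finset.filter_subset _ _
    have hK1sub : K1 ⊆ Finset.Icc 1 n := Finset.filter_subset _ _
    have hJ1img : J1.image a = X₀ := by
      ext x
      constructor
      · intro hx
        obtain ⟨i, hi, rfl⟩ := Finset.mem_image.mp hx
        exact (Finset.mem_filter.mp hi).2
      · intro hx
        obtain ⟨i, hi, hieq⟩ := Finset.mem_image.mp (hX₀I hx)
        subst hieq
        exact Finset.mem_image_of_mem a (Finset.mem_filter.mpr ⟨hi, hx⟩)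
    have hK1img : K1.image a = Y₀ := by
      ext x
      constructor
      · intro hx
        obtain ⟨i, hi, rfl⟩ := Finset.mem_image.mp hx
        exact (Finset.mem_filter.mp hi).2
      · intro hx
        obtain ⟨i, hi, hieq⟩ := Finset.mem_image.mp (hY₀I hx)
        subst hieq
        exact Finset.mem_image_of_mem a (Finset.mem_filter.mpr ⟨hi, hx⟩)
    have hJ1ne : J1.Nonempty := by
      obtain ⟨x, hx⟩ := hX₀ne
      obtain ⟨i, hi, hieq⟩ := Finset.mem_image.mp (hX₀I hx)
      subst hieq
      exact ⟨i, Finset.mem_filter.mpr ⟨hi, hx⟩⟩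
    have hK1ne : K1.Nonempty := by
      obtain ⟨x, hx⟩ := hY₀ne
      obtain ⟨i, hi, hieq⟩ := Finset.mem_image.mp (hY₀I hx)
      subst hieq
      exact ⟨i, Finset.mem_filter.mpr ⟨hi, hx⟩⟩
    have hd1 : Disjoint J1 K1 := by
      rw [Finset.disjoint_left]
      intro i hiJ hiK
      exact Finset.disjoint_left.mp hdXY (Finset.mem_filter.mp hiJ).2
        (Finset.mem_filter.mp hiK).2
    have hropt1 : OPT ((Finset.Icc 1 n).image a) = max (S J1 / S K1) (S K1 / S J1) := by
      rw [hropt, ← hJ1img, ← hK1img, hratioimg J1 K1 hJ1sub hK1sub]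
    obtain ⟨J₀, K₀, hJ₀sub, hK₀sub, hd₀, hJ₀ne, hK₀ne, hord, hropt₀⟩ :
        ∃ J₀ K₀ : Finset ℕ, J₀ ⊆ Finset.Icc 1 n ∧ K₀ ⊆ Finset.Icc 1 n ∧ Disjoint J₀ K₀ ∧
          J₀.Nonempty ∧ K₀.Nonempty ∧ S K₀ ≤ S J₀ ∧
          OPT ((Finset.Icc 1 n).image a) = S J₀ / S K₀ := by
      rcases le_total (S K1) (S J1) with h | h
      · exact ⟨J1, K1, hJ1sub, hK1sub, hd1, hJ1ne, hK1ne, h, by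
          rw [hropt1, hmaxeq _ _ (hSpos K1 hK1sub hK1ne) h]⟩
      · exact ⟨K1, J1, hK1sub, hJ1sub, hd1.symm, hK1ne, hJ1ne, h, by
          rw [hropt1, max_comm, hmaxeq _ _ (hSpos J1 hJ1sub hJ1ne) h]⟩
    have hSJ₀pos := hSpos J₀ hJ₀sub hJ₀ne
    have hSK₀pos := hSpos K₀ hK₀sub hK₀ne
    set U := J₀ ∪ K₀ with hUdef
    have hUne : U.Nonempty := by
      obtain ⟨i, hi⟩ := hJ₀ne
      exact ⟨i, Finset.mem_union_left _ hi⟩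
    set ℓ := U.max' hUne with hℓdef
    have hℓU : ℓ ∈ U := Finset.max'_mem _ _
    have hUsub : U ⊆ Finset.Icc 1 n := Finset.union_subset hJ₀sub hK₀sub
    have hℓn : ℓ ≤ n := (Finset.mem_Icc.mp (hUsub hℓU)).2
    have hℓ1 : 1 ≤ ℓ := (Finset.mem_Icc.mp (hUsub hℓU)).1
    have hℓ2 : 2 ≤ ℓ := by
      obtain ⟨i₁, hi₁⟩ := hJ₀ne
      obtain ⟨i₂, hi₂⟩ := hK₀ne
      have hne : i₁ ≠ i₂ := fun h => Finset.disjoint_left.mp hd₀ hi₁ (h ▸ hi₂)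
      have h1 : i₁ ≤ ℓ := Finset.le_max' _ _ (Finset.mem_union_left _ hi₁)
      have h2 : i₂ ≤ ℓ := Finset.le_max' _ _ (Finset.mem_union_right _ hi₂)
      have h3 : 1 ≤ i₁ := (Finset.mem_Icc.mp (hJ₀sub hi₁)).1
      have h4 : 1 ≤ i₂ := (Finset.mem_Icc.mp (hK₀sub hi₂)).1
      omega
    have hℓIcc : ℓ ∈ Finset.Icc 2 n := Finset.mem_Icc.mpr ⟨hℓ2, hℓn⟩
    set ropt := OPT ((Finset.Icc 1 n).image a) with hroptdef
    have hroptpos : 0 < ropt := lt_of_lt_of_le one_pos hr1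
    by_cases hcase1 : ∀ i ∈ U, ℓ ≤ i + L ^ 2
    · -- Case 1 : all used indices lie in the window ending at ℓ
      refine ⟨ℓ, hℓIcc, ?_⟩
      have hsubJ : J₀ ⊆ Finset.Icc (max (ℓ - L ^ 2) 1) ℓ := by
        intro i hi
        have h5 := Finset.mem_Icc.mp (hJ₀sub hi)
        have h6 := hcase1 i (Finset.mem_union_left _ hi)
        refine Finset.mem_Icc.mpr ⟨max_le (by omega) h5.1,
          Finset.le_max' _ _ (Finset.mem_union_left _ hi)⟩
      have hsubK : K₀ ⊆ Finset.Icc (max (ℓ - L ^ 2) 1) ℓ := by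
        intro i hi
        have h5 := Finset.mem_Icc.mp (hK₀sub hi)
        have h6 := hcase1 i (Finset.mem_union_right _ hi)
        refine Finset.mem_Icc.mpr ⟨max_le (by omega) h5.1,
          Finset.le_max' _ _ (Finset.mem_union_right _ hi)⟩
      refine le_trans (hfeas ℓ hℓIcc J₀ K₀ hsubJ hsubK hd₀ hJ₀ne hK₀ne hℓU) ?_
      rw [hmaxeq _ _ hSK₀pos hord, ← hropt₀]
      nlinarith [hr1, hε0]
    · -- Case 2 : some used index is below the window
      push_neg at hcase1
      obtain ⟨i₀, hi₀U, hi₀⟩ := hcase1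
      have hi₀1 : 1 ≤ i₀ := (Finset.mem_Icc.mp (hUsub hi₀U)).1
      set p := ℓ - L ^ 2 with hpdef
      have hp2 : 2 ≤ p := by omega
      have hpℓ : p + L ^ 2 = ℓ := by omega
      have hpn : p ≤ n := by omega
      by_cases hA : ∃ j, 1 ≤ j ∧ j + (L - 1) ≤ n ∧ a (j + (L - 1)) ≤ 2 * a j
      · -- Case A : L consecutive elements within a factor of 2 → pigeonhole
        obtain ⟨j, hj1, hjn, hjA⟩ := hA
        set B := Finset.Icc j (j + (L - 1)) with hBdef
        have hBsub : B ⊆ Finset.Icc 1 n := by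
          intro i hi
          rw [Finset.mem_Icc] at hi ⊢
          omega
        have hBcard : B.card = L := by
          rw [hBdef, Nat.card_Icc]
          omega
        have haj := hapos j hj1 (by omega)
        have helem : ∀ i ∈ B, a j ≤ a i ∧ a i ≤ 2 * a j := by
          intro i hi
          rw [hBdef, Finset.mem_Icc] at hi
          constructor
          · exact hamono j i hj1 hi.1 (by omega)
          · exact le_trans (hamono i (j + (L-1)) (by omega) hi.2 hjn) hjA
        have hsumB : (∑ i ∈ B, a i) < (ε / 2 * a j) * ((2:ℝ) ^ B.card - 1) := by
          have h1 : (∑ i ∈ B, a i) ≤ B.card • (2 * a j) :=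
            Finset.sum_le_card_nsmul _ _ _ (fun i hi => (helem i hi).2)
          rw [hBcard] at h1 ⊢
          rw [nsmul_eq_mul] at h1
          have h2 : (ε / 2 * a j) * (4 * L / ε) < (ε / 2 * a j) * ((2:ℝ) ^ L - 1) := by
            apply mul_lt_mul_of_pos_left _ (by positivity)
            linarith
          have h3 : (ε / 2 * a j) * (4 * L / ε) = 2 * L * a j := by
            field_simp
            ring
          nlinarith
        obtain ⟨S₁, S₂, hS₁B, hS₂B, hS12ne, hS12⟩ :=
          aux_pigeonhole B a (ε/2 * a j) (by positivity)
            (fun i hi => hanonneg B hBsub i hi) hsumB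
        set Jc := S₁ \ S₂ with hJcdef
        set Kc := S₂ \ S₁ with hKcdef
        have hJcB : Jc ⊆ B := Finset.sdiff_subset.trans hS₁B
        have hKcB : Kc ⊆ B := Finset.sdiff_subset.trans hS₂B
        have hdiff : S Jc - S Kc = (∑ i ∈ S₁, a i) - (∑ i ∈ S₂, a i) := by
          have e1 : (∑ i ∈ S₁ ∩ S₂, a i) + (∑ i ∈ S₁ \ S₂, a i) = ∑ i ∈ S₁, a i :=
            Finset.sum_inter_add_sum_sdiff S₁ S₂ a
          have e2 : (∑ i ∈ S₂ ∩ S₁, a i) + (∑ i ∈ S₂ \ S₁, a i) = ∑ i ∈ S₂, a i :=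
            Finset.sum_inter_add_sum_sdiff S₂ S₁ a
          rw [Finset.inter_comm S₂ S₁] at e2
          show (∑ i ∈ Jc, a i) - (∑ i ∈ Kc, a i) = _
          rw [hJcdef, hKcdef]
          linarith
        have hwlt : |S Jc - S Kc| < ε/2 * a j := by rw [hdiff]; exact hS12
        have hlbT : ∀ T : Finset ℕ, T ⊆ B → T.Nonempty → a j ≤ S T := by
          rintro T hT ⟨i, hi⟩
          refine le_trans (helem i (hT hi)).1 ?_
          exact Finset.single_le_sum (fun k hk => hanonneg B hBsub k (hT hk)) hi
        have hJcne : Jc.Nonempty := by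
          rw [Finset.nonempty_iff_ne_empty]
          intro hJe
          have hKcne : Kc.Nonempty := by
            rw [Finset.nonempty_iff_ne_empty]
            intro hKe
            apply hS12ne
            have h1 : S₁ ⊆ S₂ := Finset.sdiff_eq_empty_iff_subset.mp hJe
            have h2 : S₂ ⊆ S₁ := Finset.sdiff_eq_empty_iff_subset.mp hKe
            exact Finset.Subset.antisymm h1 h2
          have h1 : S Jc = 0 := by rw [hJe]; exact Finset.sum_empty
          have h2 := hlbT Kc hKcB hKcne
          rw [abs_lt] at hwlt
          rw [h1] at hwlt
          nlinarith [hwlt.1]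
        have hKcne : Kc.Nonempty := by
          rw [Finset.nonempty_iff_ne_empty]
          intro hKe
          have h1 : S Kc = 0 := by rw [hKe]; exact Finset.sum_empty
          have h2 := hlbT Jc hJcB hJcne
          rw [abs_lt] at hwlt
          rw [h1] at hwlt
          nlinarith [hwlt.2]
        have hSJc := hlbT Jc hJcB hJcne
        have hSKc := hlbT Kc hKcB hKcne
        have hSJcpos : 0 < S Jc := lt_of_lt_of_le haj hSJc
        have hSKcpos : 0 < S Kc := lt_of_lt_of_le haj hSKc
        rw [abs_lt] at hwlt
        have hrb : max (S Jc / S Kc) (S Kc / S Jc) ≤ 1 + ε := by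
          apply max_le
          · rw [div_le_iff₀ hSKcpos]
            nlinarith [hwlt.2]
          · rw [div_le_iff₀ hSJcpos]
            nlinarith [hwlt.1]
        have hUcne : (Jc ∪ Kc).Nonempty := by
          obtain ⟨i, hi⟩ := hJcne
          exact ⟨i, Finset.mem_union_left _ hi⟩
        set ℓ2 := (Jc ∪ Kc).max' hUcne with hℓ2def
        have hℓ2mem : ℓ2 ∈ Jc ∪ Kc := Finset.max'_mem _ _
        have hUcB : Jc ∪ Kc ⊆ B := Finset.union_subset hJcB hKcB
        have hℓ2B := Finset.mem_Icc.mp (hUcB hℓ2mem)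
        have hdc : Disjoint Jc Kc := disjoint_sdiff_sdiff
        have hℓ22 : 2 ≤ ℓ2 := by
          obtain ⟨i₁, hi₁⟩ := hJcne
          obtain ⟨i₂, hi₂⟩ := hKcne
          have hne : i₁ ≠ i₂ := fun h => Finset.disjoint_left.mp hdc hi₁ (h ▸ hi₂)
          have h1 : i₁ ≤ ℓ2 := Finset.le_max' _ _ (Finset.mem_union_left _ hi₁)
          have h2 : i₂ ≤ ℓ2 := Finset.le_max' _ _ (Finset.mem_union_right _ hi₂)
          have h3 := Finset.mem_Icc.mp (hBsub (hJcB hi₁))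
          have h4 := Finset.mem_Icc.mp (hBsub (hKcB hi₂))
          omega
        have hℓ2n : ℓ2 ≤ n := by
          have := Finset.mem_Icc.mp (hBsub (hUcB hℓ2mem))
          omega
        have hℓ2Icc : ℓ2 ∈ Finset.Icc 2 n := Finset.mem_Icc.mpr ⟨hℓ22, hℓ2n⟩
        refine ⟨ℓ2, hℓ2Icc, ?_⟩
        have hsubJc : Jc ⊆ Finset.Icc (max (ℓ2 - L ^ 2) 1) ℓ2 := by
          intro i hi
          have h5 := Finset.mem_Icc.mp (hJcB hi)
          refine Finset.mem_Icc.mpr ⟨max_le (by omega) (by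
            have := Finset.mem_Icc.mp (hBsub (hJcB hi)); omega),
            Finset.le_max' _ _ (Finset.mem_union_left _ hi)⟩
        have hsubKc : Kc ⊆ Finset.Icc (max (ℓ2 - L ^ 2) 1) ℓ2 := by
          intro i hi
          have h5 := Finset.mem_Icc.mp (hKcB hi)
          refine Finset.mem_Icc.mpr ⟨max_le (by omega) (by
            have := Finset.mem_Icc.mp (hBsub (hKcB hi)); omega),
            Finset.le_max' _ _ (Finset.mem_union_right _ hi)⟩
        refine le_trans (hfeas ℓ2 hℓ2Icc Jc Kc hsubJc hsubKc hdc hJcne hKcne hℓ2mem) ?_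
        refine le_trans hrb ?_
        nlinarith [hr1, hε0]
      · -- Case B : fast growth everywhere
        push_neg at hA
        have hσ : (∑ i ∈ Finset.Icc 1 (p-1), a i) ≤ 2*((L:ℝ)-1) * a (p-1) :=
          aux_sigma n L a hL2 hpos hamono hA (p-1) (by omega) (by omega)
        have hap := hapos p (by omega) hpn
        have hap1pos := hapos (p-1) (by omega) (by omega)
        have hap1 : a (p-1) ≤ a p := hamono (p-1) p (by omega) (by omega) hpn
        have hσp : (∑ i ∈ Finset.Icc 1 (p-1), a i) ≤ 2*(L:ℝ) * a p := by
          have hL1 : (1:ℝ) ≤ (L:ℝ) := by exact_mod_cast Nat.one_le_iff_ne_zero.mpr (by omega)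
          nlinarith
        set s := S (U.filter (fun i => ¬ p ≤ i)) with hsdef
        have hs0 : 0 ≤ s := Finset.sum_nonneg (fun i hi =>
          hanonneg U hUsub i (Finset.mem_filter.mp hi).1)
        have hssmall : s ≤ 2*(L:ℝ)*a p := by
          refine le_trans ?_ hσp
          apply Finset.sum_le_sum_of_subset_of_nonneg
          · intro i hi
            rw [Finset.mem_filter] at hi
            have := Finset.mem_Icc.mp (hUsub hi.1)
            rw [Finset.mem_Icc]
            omega
          · intro i hi _
            have := Finset.mem_Icc.mp hi
            exact (hapos i this.1 (by omega)).le
        by_cases hBi : s ≤ ε * S K₀ / (1 + ε)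
        · -- Case B(i) : strip the small elements from both sides
          set J' := J₀.filter (fun i => p ≤ i) with hJ'def
          set K' := K₀.filter (fun i => p ≤ i) with hK'def
          have hsplitJ : S J' + S (J₀.filter (fun i => ¬ p ≤ i)) = S J₀ :=
            Finset.sum_filter_add_sum_filter_not J₀ _ a
          have hsplitK : S K' + S (K₀.filter (fun i => ¬ p ≤ i)) = S K₀ :=
            Finset.sum_filter_add_sum_filter_not K₀ _ a
          have hJsm : S (J₀.filter (fun i => ¬ p ≤ i)) ≤ s := by
            apply Finset.sum_le_sum_of_subset_of_nonneg
            · exact Finset.filter_subset_filter _ Finset.subset_union_left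
            · intro i hi _
              exact hanonneg U hUsub i (Finset.mem_filter.mp hi).1
          have hKsm : S (K₀.filter (fun i => ¬ p ≤ i)) ≤ s := by
            apply Finset.sum_le_sum_of_subset_of_nonneg
            · exact Finset.filter_subset_filter _ Finset.subset_union_right
            · intro i hi _
              exact hanonneg U hUsub i (Finset.mem_filter.mp hi).1
          have hτJ : ε * S K₀ / (1 + ε) ≤ ε * S J₀ / (1 + ε) := by gcongr
          have hSJ'ge : S J₀ / (1+ε) ≤ S J' := by
            have key : S J₀ / (1+ε) = S J₀ - ε * S J₀/(1+ε) := by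
              field_simp
              ring
            linarith
          have hSK'ge : S K₀ / (1+ε) ≤ S K' := by
            have key : S K₀ / (1+ε) = S K₀ - ε * S K₀/(1+ε) := by
              field_simp
              ring
            linarith
          have hSJ'pos : 0 < S J' := lt_of_lt_of_le (div_pos hSJ₀pos hε0') hSJ'ge
          have hSK'pos : 0 < S K' := lt_of_lt_of_le (div_pos hSK₀pos hε0') hSK'ge
          have hJ'ne : J'.Nonempty := by
            rw [Finset.nonempty_iff_ne_empty]
            intro h
            rw [h] at hSJ'pos
            simp [hSdef] at hSJ'pos
          have hK'ne : K'.Nonempty := by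
            rw [Finset.nonempty_iff_ne_empty]
            intro h
            rw [h] at hSK'pos
            simp [hSdef] at hSK'pos
          have hd' : Disjoint J' K' :=
            hd₀.mono (Finset.filter_subset _ _) (Finset.filter_subset _ _)
          have hℓJ'K' : ℓ ∈ J' ∪ K' := by
            rcases Finset.mem_union.mp hℓU with h | h
            · exact Finset.mem_union_left _ (Finset.mem_filter.mpr ⟨h, by omega⟩)
            · exact Finset.mem_union_right _ (Finset.mem_filter.mpr ⟨h, by omega⟩)
          have hsubJ' : J' ⊆ Finset.Icc (max (ℓ - L ^ 2) 1) ℓ := by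
            intro i hi
            rw [Finset.mem_filter] at hi
            have h5 := Finset.mem_Icc.mp (hJ₀sub hi.1)
            refine Finset.mem_Icc.mpr ⟨max_le (by omega) h5.1,
              Finset.le_max' _ _ (Finset.mem_union_left _ hi.1)⟩
          have hsubK' : K' ⊆ Finset.Icc (max (ℓ - L ^ 2) 1) ℓ := by
            intro i hi
            rw [Finset.mem_filter] at hi
            have h5 := Finset.mem_Icc.mp (hK₀sub hi.1)
            refine Finset.mem_Icc.mpr ⟨max_le (by omega) h5.1,
              Finset.le_max' _ _ (Finset.mem_union_right _ hi.1)⟩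
          refine ⟨ℓ, hℓIcc,
            le_trans (hfeas ℓ hℓIcc J' K' hsubJ' hsubK' hd' hJ'ne hK'ne hℓJ'K') ?_⟩
          have hJ'le : S J' ≤ S J₀ := by
            have hnn : 0 ≤ S (J₀.filter (fun i => ¬ p ≤ i)) :=
              Finset.sum_nonneg (fun i hi => hanonneg J₀ hJ₀sub i (Finset.mem_filter.mp hi).1)
            linarith
          have hK'le : S K' ≤ S K₀ := by
            have hnn : 0 ≤ S (K₀.filter (fun i => ¬ p ≤ i)) :=
              Finset.sum_nonneg (fun i hi => hanonneg K₀ hK₀sub i (Finset.mem_filter.mp hi).1)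
            linarith
          apply max_le
          · calc S J' / S K' ≤ S J₀ / (S K₀/(1+ε)) := by
                  apply div_le_div₀ hSJ₀pos.le hJ'le (div_pos hSK₀pos hε0') hSK'ge
              _ = (1+ε) * (S J₀ / S K₀) := by
                  field_simp
              _ = (1+ε) * ropt := by rw [hropt₀]
          · calc S K' / S J' ≤ S K₀ / (S J₀/(1+ε)) := by
                  apply div_le_div₀ hSK₀pos.le hK'le (div_pos hSJ₀pos hε0') hSJ'ge
              _ = (1+ε) * (S K₀ / S J₀) := by
                  field_simp
              _ ≤ (1+ε) * 1 := by
                  have := (div_le_one hSJ₀pos).mpr hord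
                  nlinarith
              _ ≤ (1+ε) * ropt := by nlinarith [hr1]
        · -- Case B(ii) : impossible
          exfalso
          push_neg at hBi
          have hT1 : ε * S K₀ < (1 + ε) * s := by
            rw [div_lt_iff₀ hε0'] at hBi
            linarith
          have hT4L : ε * S K₀ < 4*(L:ℝ)*a p := by
            have hL1 : (1:ℝ) ≤ (L:ℝ) := by exact_mod_cast Nat.one_le_iff_ne_zero.mpr (by omega)
            nlinarith
          have hgr : (2:ℝ)^(L+1) * a p ≤ a (ℓ - 1) := by
            have hLL : (L+1)*(L-1) + 1 = L^2 := by
              obtain ⟨u, hu⟩ : ∃ u, L = u + 2 := ⟨L - 2, by omega⟩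
              rw [hu]
              have e1 : (u+2)^2 = u*u + 4*u + 4 := by ring
              have e2 : (u+2+1)*(u+2-1) = u*u + 4*u + 3 := by
                have : u+2-1 = u+1 := by omega
                rw [this]; ring
              omega
            have hidx : p + (L+1)*(L-1) = ℓ - 1 := by omega
            have h := aux_growth n L a hA (L+1) p (by omega) (by omega)
            rwa [hidx] at h
          have h2L : 4*(L:ℝ)/ε < 2^(L+1) := by
            have hpow : (2:ℝ)^(L+1) = 2 * 2^L := by rw [pow_succ]; ring
            have hp2L : (0:ℝ) < 2^L := by positivity
            rw [hpow]
            linarith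
          have hTlt : S K₀ < a (ℓ - 1) := by
            have h1 : S K₀ < 4*(L:ℝ)*a p/ε := by
              rw [lt_div_iff₀ hε0]
              nlinarith
            have h2 : 4*(L:ℝ)*a p/ε < 2^(L+1) * a p := by
              rw [div_lt_iff₀ hε0]
              have := mul_lt_mul_of_pos_right h2L hap
              calc 4*(L:ℝ)*a p = (4*L/ε) * a p * ε := by field_simp
                _ < 2^(L+1) * a p * ε := by
                    apply mul_lt_mul_of_pos_right _ hε0
                    exact mul_lt_mul_of_pos_right h2L hap
            linarith [hgr]
          have haℓ : a (ℓ - 1) < a ℓ := hsorted (ℓ-1) ℓ (by omega) (by omega) hℓn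
          have hℓJ₀ : ℓ ∈ J₀ := by
            rcases Finset.mem_union.mp hℓU with h | h
            · exact h
            · exfalso
              have : a ℓ ≤ S K₀ :=
                Finset.single_le_sum (fun i hi => hanonneg K₀ hK₀sub i hi) h
              linarith
          have hSJa : a ℓ ≤ S J₀ :=
            Finset.single_le_sum (fun i hi => hanonneg J₀ hJ₀sub i hi) hℓJ₀
          have hal1pos := hapos (ℓ-1) (by omega) (by omega)
          have haℓpos := hapos ℓ (by omega) hℓn
          have hopt1 : ropt ≤ a ℓ / a (ℓ - 1) := by
            have hsub1 : ({ℓ} : Finset ℕ) ⊆ Finset.Icc 1 n := by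
              rw [Finset.singleton_subset_iff, Finset.mem_Icc]; omega
            have hsub2 : ({ℓ-1} : Finset ℕ) ⊆ Finset.Icc 1 n := by
              rw [Finset.singleton_subset_iff, Finset.mem_Icc]; omega
            have hdisj12 : Disjoint ({ℓ} : Finset ℕ) ({ℓ-1} : Finset ℕ) := by
              rw [Finset.disjoint_singleton]; omega
            have h := hOPT_le {ℓ} {ℓ-1} hsub1 hsub2 hdisj12
              (Finset.singleton_nonempty _) (Finset.singleton_nonempty _)
            have hsS1 : S ({ℓ} : Finset ℕ) = a ℓ := Finset.sum_singleton _ _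
            have hsS2 : S ({ℓ-1} : Finset ℕ) = a (ℓ-1) := Finset.sum_singleton _ _
            rw [hsS1, hsS2, hmaxeq _ _ hal1pos haℓ.le] at h
            exact h
          have h2 : a ℓ / S K₀ ≤ ropt := by
            rw [hropt₀]
            gcongr
          have h3 : a ℓ / S K₀ ≤ a ℓ / a (ℓ-1) := le_trans h2 hopt1
          have h4 : a (ℓ-1) ≤ S K₀ := by
            have := (div_le_div_iff_of_pos_left haℓpos hSK₀pos hal1pos).mp h3
            exact this
          linarith
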